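/- arXiv:2004.08980 — 4 statements merged into one kernel-verified Lean document; each statement's English description precedes it below -/
import Mathlib

section
/- The set {n ∈ ℕ : there exists a finite group G of odd order with nim(GEN(G)) = n} equals {0,1,2}. -/
/-- The minimum excludant of a set of natural numbers. -/
noncomputable def mex (S : Set ℕ) : ℕ := sInf {n : ℕ | n ∉ S}

open Classical in
/-- The nim-value of a position in the achievement game GEN(G): a position `P`
is terminal when it generates `G` (so its nim-value is `mex ∅ = 0`); otherwise
its options are the sets `insert g P` for `g ∉ P`. -/
noncomputable def gameNim {G : Type*} [Group G] [Fintype G] (P : Finset G) : ℕ :=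
  if Subgroup.closure (P : Set G) = ⊤ then 0
  else mex {n : ℕ | ∃ g : {g : G // g ∉ P}, gameNim (insert g.1 P) = n}
termination_by Pᶜ.card
decreasing_by
  exact Finset.card_lt_card (by
    constructor
    · intro x hx
      simp only [Finset.mem_compl, Finset.mem_insert] at hx ⊢
      exact fun h => hx (Or.inr h)
    · intro hsub
      have h1 : g.1 ∈ Pᶜ := Finset.mem_compl.mpr g.2
      have h2 : g.1 ∈ (insert g.1 P)ᶜ := hsub h1
      simp at h2)


lemma mex_eq (S : Set ℕ) (k : ℕ) (hk : k ∉ S) (h : ∀ m < k, m ∈ S) : mex S = k := by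
  refine le_antisymm (Nat.sInf_le hk) (le_csInf ⟨k, hk⟩ ?_)
  intro n hn
  by_contra hlt
  push_neg at hlt
  exact hn (h n hlt)


section
variable {G : Type*} [Group G] [Fintype G]

def C1 (H : Subgroup G) : Prop := ∃ g : G, H ⊔ Subgroup.closure {g} = ⊤
def C2 (H : Subgroup G) : Prop := ∃ g : G, C1 (H ⊔ Subgroup.closure {g})

omit [Fintype G] in
lemma C1.mono {H K : Subgroup G} (hHK : H ≤ K) : C1 H → C1 K := by
  rintro ⟨g, hg⟩
  exact ⟨g, top_unique (hg ▸ sup_le_sup_right hHK _)⟩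

omit [Fintype G] in
lemma C1.toC2 {H : Subgroup G} (h : C1 H) : C2 H := by
  obtain ⟨g, hg⟩ := h
  exact ⟨g, g, by rw [hg]; simp⟩

open Classical in
omit [Fintype G] in
lemma closure_insert_finset (P : Finset G) (g : G) :
    Subgroup.closure ((insert g P : Finset G) : Set G)
      = Subgroup.closure (P : Set G) ⊔ Subgroup.closure {g} := by
  rw [Finset.coe_insert, Set.insert_eq, Subgroup.closure_union, sup_comm]

lemma odd_card_subgroup (hodd : Odd (Fintype.card G)) (H : Subgroup G) :
    Odd (Nat.card H) := by
  have hd : Nat.card H ∣ Nat.card G := Subgroup.card_subgroup_dvd_card H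
  rw [Nat.card_eq_fintype_card (α := G)] at hd
  rw [Nat.odd_iff] at hodd ⊢
  rcases Nat.mod_two_eq_zero_or_one (Nat.card H) with h | h
  · have : 2 ∣ Fintype.card G := dvd_trans (Nat.dvd_of_mod_eq_zero h) hd
    omega
  · exact h

lemma exists_mem_closure_notMem (hodd : Odd (Fintype.card G)) (P : Finset G)
    (heven : Even P.card) :
    ∃ g : G, g ∈ Subgroup.closure (P : Set G) ∧ g ∉ P := by
  by_contra hc
  push_neg at hc
  have hsub : ((Subgroup.closure (P : Set G)) : Set G) ⊆ (P : Set G) := fun x hx => hc x hx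
  have heq : (P : Set G) = ((Subgroup.closure (P : Set G)) : Set G) :=
    le_antisymm Subgroup.subset_closure hsub
  have hcard : P.card = Nat.card (Subgroup.closure (P : Set G)) := by
    rw [← Set.ncard_coe_finset P]
    conv_lhs => rw [heq]
    rw [← Nat.card_coe_set_eq]
    rfl
  rw [hcard] at heven
  exact (Nat.not_odd_iff_even.mpr heven) (odd_card_subgroup hodd _)
end


section
variable {G : Type*} [Group G] [Fintype G]

lemma gameNim_terminal (P : Finset G) (h : Subgroup.closure (P : Set G) = ⊤) :
    gameNim P = 0 := by
  rw [gameNim, if_pos h]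

open Classical in
lemma gameNim_nonterminal (P : Finset G) (h : Subgroup.closure (P : Set G) ≠ ⊤) :
    gameNim P = mex {n : ℕ | ∃ g : {g : G // g ∉ P}, gameNim (insert g.1 P) = n} := by
  rw [gameNim, if_neg h]

open Classical in
lemma compl_card_insert_lt (P : Finset G) (g : G) (hg : g ∉ P) :
    ((insert g P)ᶜ).card < (Pᶜ).card := by
  exact Finset.card_lt_card (by
    constructor
    · intro x hx
      simp only [Finset.mem_compl, Finset.mem_insert] at hx ⊢
      exact fun h => hx (Or.inr h)
    · intro hsub
      have h1 : g ∈ Pᶜ := Finset.mem_compl.mpr hg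
      have h2 : g ∈ (insert g P)ᶜ := hsub h1
      simp at h2)

open Classical Subgroup in
lemma key (hodd : Odd (Fintype.card G)) :
    ∀ N (P : Finset G), (Pᶜ).card ≤ N → Subgroup.closure (P : Set G) ≠ ⊤ →
    gameNim P = if Even P.card then (if C2 (Subgroup.closure (P : Set G)) then 2 else 1)
                else (if C1 (Subgroup.closure (P : Set G)) then 1 else 0) := by
  intro N
  induction N with
  | zero =>
    intro P hle hH
    exfalso
    have : (Pᶜ).card = 0 := Nat.le_zero.mp hle
    have hP : Pᶜ = ∅ := Finset.card_eq_zero.mp this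
    have : P = Finset.univ := by
      rwa [Finset.compl_eq_empty_iff] at hP
    apply hH
    rw [this]
    simp [Subgroup.closure_univ]
  | succ n ih =>
    intro P hle hH
    set H := Subgroup.closure (P : Set G) with hHdef
    have hPH : (P : Set G) ⊆ (H : Set G) := Subgroup.subset_closure
    -- option values
    set S : Set ℕ := {m : ℕ | ∃ g : {g : G // g ∉ P}, gameNim (insert g.1 P) = m} with hS
    have hNim : gameNim P = mex S := gameNim_nonterminal P hH
    -- closure of options
    have hKcl : ∀ g : G, Subgroup.closure ((insert g P : Finset G) : Set G)
        = H ⊔ Subgroup.closure {g} := fun g => closure_insert_finset P g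
    -- induction applicable to options
    have hIH : ∀ g : G, g ∉ P → (H ⊔ Subgroup.closure {g}) ≠ ⊤ →
        gameNim (insert g P) = if Even (insert g P).card
          then (if C2 (H ⊔ Subgroup.closure {g}) then 2 else 1)
          else (if C1 (H ⊔ Subgroup.closure {g}) then 1 else 0) := by
      intro g hg hK
      have := ih (insert g P) (by
        have := compl_card_insert_lt P g hg
        omega) (by rw [hKcl g]; exact hK)
      rwa [hKcl g] at this
    have hcardins : ∀ g : G, g ∉ P → (insert g P).card = P.card + 1 :=
      fun g hg => Finset.card_insert_of_notMem hg
    -- terminal options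
    have hterm : ∀ g : G, (H ⊔ Subgroup.closure {g}) = ⊤ → g ∉ P ∧ gameNim (insert g P) = 0 := by
      intro g hg
      have hgP : g ∉ P := by
        intro hmem
        apply hH
        have : Subgroup.closure ({g} : Set G) ≤ H :=
          (Subgroup.closure_le _).mpr (by simpa using hPH hmem)
        rw [← hg, sup_eq_left.mpr this]
      exact ⟨hgP, gameNim_terminal _ (by rw [hKcl g]; exact hg)⟩
    by_cases hpar : Even P.card
    · -- even case
      rw [if_pos hpar]
      have hparins : ∀ g : G, g ∉ P → ¬ Even (insert g P).card := by
        intro g hg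
        rw [hcardins g hg, Nat.even_add_one]
        exact fun h => h hpar
      -- within move
      obtain ⟨w, hwH, hwP⟩ := exists_mem_closure_notMem hodd P hpar
      have hKw : H ⊔ Subgroup.closure {w} = H := sup_eq_left.mpr
        ((Subgroup.closure_le _).mpr (by simpa using hwH))
      by_cases hC2 : C2 H
      · rw [if_pos hC2]
        rw [hNim]
        apply mex_eq
        · -- 2 ∉ S
          rintro ⟨⟨g, hg⟩, hval⟩
          by_cases hK : (H ⊔ Subgroup.closure {g}) = ⊤
          · rw [(hterm g hK).2] at hval; exact absurd hval (by norm_num)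
          · rw [hIH g hg hK, if_neg (hparins g hg)] at hval
            split at hval <;> omega
        · intro m hm
          interval_cases m
          · -- 0 ∈ S
            by_cases hC1 : C1 H
            · obtain ⟨g, hg⟩ := hC1
              exact ⟨⟨g, (hterm g hg).1⟩, (hterm g hg).2⟩
            · refine ⟨⟨w, hwP⟩, ?_⟩
              rw [hIH w hwP (by rw [hKw]; exact hH), if_neg (hparins w hwP), hKw,
                if_neg hC1]
          · -- 1 ∈ S
            by_cases hC1 : C1 H
            · refine ⟨⟨w, hwP⟩, ?_⟩
              rw [hIH w hwP (by rw [hKw]; exact hH), if_neg (hparins w hwP), hKw,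
                if_pos hC1]
            · obtain ⟨a, ha⟩ := hC2
              have haT : (H ⊔ Subgroup.closure {a}) ≠ ⊤ := fun h => hC1 ⟨a, h⟩
              have haP : a ∉ P := by
                intro hmem
                apply hC1
                have : Subgroup.closure ({a} : Set G) ≤ H :=
                  (Subgroup.closure_le _).mpr (by simpa using hPH hmem)
                rw [sup_eq_left.mpr this] at ha
                exact ha.mono le_rfl
              refine ⟨⟨a, haP⟩, ?_⟩
              rw [hIH a haP haT, if_neg (hparins a haP), if_pos ha]
      · rw [if_neg hC2]
        have hC1 : ¬ C1 H := fun h => hC2 h.toC2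
        rw [hNim]
        apply mex_eq
        · -- 1 ∉ S
          rintro ⟨⟨g, hg⟩, hval⟩
          by_cases hK : (H ⊔ Subgroup.closure {g}) = ⊤
          · exact hC1 ⟨g, hK⟩
          · rw [hIH g hg hK, if_neg (hparins g hg)] at hval
            have : ¬ C1 (H ⊔ Subgroup.closure {g}) := fun h => hC2 ⟨g, h⟩
            rw [if_neg this] at hval
            omega
        · intro m hm
          interval_cases m
          -- 0 ∈ S via within move
          refine ⟨⟨w, hwP⟩, ?_⟩
          rw [hIH w hwP (by rw [hKw]; exact hH), if_neg (hparins w hwP), hKw,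
            if_neg hC1]
    · -- odd case
      rw [if_neg hpar]
      have hparins : ∀ g : G, g ∉ P → Even (insert g P).card := by
        intro g hg
        rw [hcardins g hg, Nat.even_add_one]
        exact hpar
      by_cases hC1 : C1 H
      · rw [if_pos hC1]
        rw [hNim]
        apply mex_eq
        · -- 1 ∉ S
          rintro ⟨⟨g, hg⟩, hval⟩
          by_cases hK : (H ⊔ Subgroup.closure {g}) = ⊤
          · rw [(hterm g hK).2] at hval; exact absurd hval (by norm_num)
          · rw [hIH g hg hK, if_pos (hparins g hg),
              if_pos ((hC1.mono le_sup_left).toC2)] at hval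
            omega
        · intro m hm
          interval_cases m
          obtain ⟨g, hg⟩ := hC1
          exact ⟨⟨g, (hterm g hg).1⟩, (hterm g hg).2⟩
      · rw [if_neg hC1]
        rw [hNim]
        apply mex_eq
        · -- 0 ∉ S
          rintro ⟨⟨g, hg⟩, hval⟩
          have hK : (H ⊔ Subgroup.closure {g}) ≠ ⊤ := fun h => hC1 ⟨g, h⟩
          rw [hIH g hg hK, if_pos (hparins g hg)] at hval
          split at hval <;> omega
        · intro m hm
          omega
end

section Witnesses

-- Witness for 0 : the trivial group
lemma nim_trivial : gameNim (∅ : Finset (Multiplicative (ZMod 1))) = 0 := by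
  apply gameNim_terminal
  rw [Subgroup.eq_top_iff']
  intro x
  have : x = 1 := Subsingleton.elim x 1
  rw [this]
  exact one_mem _

abbrev G3 := Multiplicative (ZMod 3)

lemma card_G3 : Fintype.card G3 = 3 := by
  rw [Fintype.card_multiplicative, ZMod.card]

lemma C1_bot_G3 : C1 (⊥ : Subgroup G3) := by
  refine ⟨Multiplicative.ofAdd 1, ?_⟩
  rw [bot_sup_eq, Subgroup.eq_top_iff']
  intro x
  rw [Subgroup.mem_closure_singleton]
  refine ⟨((x.toAdd.val : ℕ) : ℤ), ?_⟩
  rw [zpow_natCast]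
  have : (Multiplicative.ofAdd (1 : ZMod 3)) ^ (x.toAdd.val) =
      Multiplicative.ofAdd ((x.toAdd.val : ℕ) • (1 : ZMod 3)) := by
    rw [ofAdd_nsmul]
  rw [this, nsmul_eq_mul, mul_one]
  have : ((x.toAdd.val : ℕ) : ZMod 3) = x.toAdd := ZMod.natCast_rightInverse x.toAdd
  rw [this]
  rfl

lemma nim_G3 : gameNim (∅ : Finset G3) = 2 := by
  have hbot : Subgroup.closure ((∅ : Finset G3) : Set G3) = ⊥ := by
    simp [Subgroup.closure_empty]
  have hodd : Odd (Fintype.card G3) := by rw [card_G3]; decide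
  have hne : Subgroup.closure ((∅ : Finset G3) : Set G3) ≠ ⊤ := by
    rw [hbot]
    exact bot_ne_top
  rw [key hodd ((∅ : Finset G3)ᶜ).card ∅ le_rfl hne]
  rw [Finset.card_empty, if_pos Even.zero, hbot, if_pos C1_bot_G3.toC2]

abbrev G27 := Multiplicative (ZMod 3 × ZMod 3 × ZMod 3)

lemma card_G27 : Fintype.card G27 = 27 := by
  rw [Fintype.card_multiplicative]
  simp [ZMod.card]

lemma pow3_G27 : ∀ g : G27, g ^ (3 : ℕ) = 1 := by decide

lemma zpow_reduce_G27 (g : G27) (m : ℤ) : g ^ m = g ^ ((m % 3).toNat) := by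
  have hm : m = 3 * (m / 3) + m % 3 := (Int.mul_ediv_add_emod m 3).symm
  have hnonneg : 0 ≤ m % 3 := Int.emod_nonneg m (by norm_num)
  calc g ^ m = g ^ (3 * (m / 3) + m % 3) := by rw [← hm]
    _ = (g ^ (3 : ℤ)) ^ (m / 3) * g ^ (m % 3) := by
        rw [zpow_add, zpow_mul]
    _ = g ^ (m % 3) := by
        have : g ^ (3 : ℤ) = 1 := by
          rw [show (3 : ℤ) = ((3 : ℕ) : ℤ) from rfl, zpow_natCast, pow3_G27]
        rw [this, one_zpow, one_mul]
    _ = g ^ ((m % 3).toNat) := by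
        rw [← zpow_natCast, Int.toNat_of_nonneg hnonneg]

lemma not_C2_bot_G27 : ¬ C2 (⊥ : Subgroup G27) := by
  rintro ⟨g, h, hgh⟩
  rw [bot_sup_eq] at hgh
  have hpair : Subgroup.closure ({g, h} : Set G27) = ⊤ := by
    rw [show ({g, h} : Set G27) = {g} ∪ {h} from rfl, Subgroup.closure_union, hgh]
  have hsurj : Function.Surjective
      (fun p : Fin 3 × Fin 3 => g ^ (p.1 : ℕ) * h ^ (p.2 : ℕ)) := by
    intro z
    have hz : z ∈ Subgroup.closure ({g, h} : Set G27) := hpair ▸ Subgroup.mem_top z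
    obtain ⟨m, n, hmn⟩ := Subgroup.mem_closure_pair.mp hz
    have hm3 : (m % 3).toNat < 3 := by omega
    have hn3 : (n % 3).toNat < 3 := by omega
    refine ⟨(⟨(m % 3).toNat, hm3⟩, ⟨(n % 3).toNat, hn3⟩), ?_⟩
    show g ^ ((m % 3).toNat) * h ^ ((n % 3).toNat) = z
    rw [← zpow_reduce_G27, ← zpow_reduce_G27, hmn]
  have := Fintype.card_le_of_surjective _ hsurj
  rw [card_G27] at this
  simp at this

lemma nim_G27 : gameNim (∅ : Finset G27) = 1 := by
  have hbot : Subgroup.closure ((∅ : Finset G27) : Set G27) = ⊥ := by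
    simp [Subgroup.closure_empty]
  have hodd : Odd (Fintype.card G27) := by rw [card_G27]; decide
  have hne : Subgroup.closure ((∅ : Finset G27) : Set G27) ≠ ⊤ := by
    rw [hbot]
    exact bot_ne_top
  rw [key hodd ((∅ : Finset G27)ᶜ).card ∅ le_rfl hne]
  rw [Finset.card_empty, if_pos Even.zero, hbot, if_neg not_C2_bot_G27]

end Witnesses


/-- The spectrum of nim-values of GEN(G) over finite groups G of odd order is
`{0,1,2}`. -/
theorem spectrum_of_nim_values_GEN_odd :
    {n : ℕ | ∃ (G : Type) (_ : Group G) (_ : Fintype G),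
      Odd (Fintype.card G) ∧ gameNim (∅ : Finset G) = n} = {0, 1, 2} := by
  ext n
  simp only [Set.mem_setOf_eq, Set.mem_insert_iff, Set.mem_singleton_iff]
  constructor
  · rintro ⟨G, _, _, hodd, rfl⟩
    classical
    by_cases hT : Subgroup.closure ((∅ : Finset G) : Set G) = ⊤
    · left
      exact gameNim_terminal _ hT
    · rw [key hodd ((∅ : Finset G)ᶜ).card ∅ le_rfl hT, Finset.card_empty,
        if_pos Even.zero]
      split_ifs <;> simp
  · rintro (rfl | rfl | rfl)
    · exact ⟨Multiplicative (ZMod 1), inferInstance, inferInstance,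
        by simp [Fintype.card_multiplicative, ZMod.card], nim_trivial⟩
    · exact ⟨G27, inferInstance, inferInstance, by rw [card_G27]; decide, nim_G27⟩
    · exact ⟨G3, inferInstance, inferInstance, by rw [card_G3]; decide, nim_G3⟩
end

section
/- Let G be a finite group, let I be a structure subgroup with I ≠ G, and let O denote the set of structure subgroups J that are options of X_I. Define O_T := {nim(Q) : Q a position with |Q| odd and ⌈Q⌉ ∈ O} and E_T := {nim(Q) : Q a position with |Q| even and ⌈Q⌉ ∈ O}. If |I| is even, then every position P with ⌈P⌉ = I and |P| even satisfies nim(P) = mex(O_T), and every position P with ⌈P⌉ = I and |P| odd satisfies nim(P) = mex(E_T ∪ {mex(O_T)}). If |I| is odd, then every position P with ⌈P⌉ = I and |P| odd satisfies nim(P) = mex(E_T), and every position P with ⌈P⌉ = I and |P| even satisfies nim(P) = mex(O_T ∪ {mex(E_T)}). -/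
/-- ⌈P⌉: the intersection of all maximal subgroups of `G` containing `P`
(equal to `G`, i.e. `⊤`, if no maximal subgroup contains `P`). -/
def ceilSet {G : Type*} [Group G] (P : Set G) : Subgroup G :=
  sInf {M : Subgroup G | IsCoatom M ∧ P ⊆ (M : Set G)}

/-- The deficiency of a subset `S` of a finite group `G`: the minimum size of a
subset `Q` of `G` such that `S ∪ Q` generates `G`. -/
noncomputable def deficiency {G : Type*} [Group G] [Fintype G] (S : Set G) : ℕ :=
  sInf {n : ℕ | ∃ Q : Finset G, Q.card = n ∧ Subgroup.closure (S ∪ (Q : Set G)) = ⊤}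

/-- The structure class `X_J` is an option of the structure class `X_I`. -/
def IsStructOption {G : Type*} [Group G] (I J : Subgroup G) : Prop :=
  ∃ g ∉ I, ceilSet ((I : Set G) ∪ {g}) = J

section mexlemmas

lemma mem_of_lt_mex {S : Set ℕ} {n : ℕ} (h : n < mex S) : n ∈ S := by
  by_contra hn
  exact absurd (Nat.sInf_le hn) (not_le.mpr h)

lemma mex_notMem {S : Set ℕ} (h : ∃ n, n ∉ S) : mex S ∉ S :=
  Nat.sInf_mem h

lemma mex_le_of_subset_Iic {S : Set ℕ} {N : ℕ} (h : S ⊆ Set.Iic N) : mex S ≤ N + 1 :=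
  Nat.sInf_le (fun hm => by simpa using h hm)

lemma mex_insert_ne {S : Set ℕ} {N b : ℕ} (hS : S ⊆ Set.Iic N) (hb : b ≠ mex S) :
    mex (insert b S) = mex S := by
  have hne : ∃ n, n ∉ S := ⟨N + 1, fun hm => by simpa using hS hm⟩
  have hmS : mex S ∉ S := mex_notMem hne
  have hne2 : ∃ n, n ∉ insert b S :=
    ⟨max b N + 1, by
      intro hm
      rcases hm with hm | hm
      · omega
      · have := hS hm; simp at this⟩
  refine le_antisymm (Nat.sInf_le ?_) ?_
  · simp only [Set.mem_setOf_eq, Set.mem_insert_iff, not_or]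
    exact ⟨fun h => hb h.symm, hmS⟩
  · exact Nat.sInf_le (fun hm => (mex_notMem hne2) (Set.mem_insert_iff.mpr (Or.inr hm)))

lemma mex_le_ncard {S : Set ℕ} (hS : S.Finite) : mex S ≤ S.ncard := by
  by_contra h
  push_neg at h
  have hsub : Set.Iic S.ncard ⊆ S := fun n hn =>
    mem_of_lt_mex (lt_of_le_of_lt (Set.mem_Iic.mp hn) h)
  have := Set.ncard_le_ncard hsub hS
  rw [show Set.Iic S.ncard = ↑(Finset.Iic S.ncard) by simp, Set.ncard_coe_finset] at this
  simp [Nat.card_Iic] at this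

end mexlemmas

section ceillemmas
variable {G : Type*} [Group G]

lemma subset_ceilSet (P : Set G) : P ⊆ (ceilSet P : Set G) := by
  intro x hx
  simp only [ceilSet, SetLike.mem_coe, Subgroup.mem_sInf]
  exact fun M hM => hM.2 hx

lemma closure_le_ceilSet (P : Set G) : Subgroup.closure P ≤ ceilSet P :=
  (Subgroup.closure_le _).mpr (subset_ceilSet P)

lemma ceilSet_idem (P : Set G) : ceilSet ((ceilSet P : Subgroup G) : Set G) = ceilSet P := by
  unfold ceilSet
  congr 1
  ext M
  simp only [Set.mem_setOf_eq, and_congr_right_iff]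
  intro hM
  constructor
  · exact fun h => (subset_ceilSet P).trans h
  · intro h
    have : ceilSet P ≤ M := sInf_le ⟨hM, h⟩
    exact this

lemma ceilSet_insert_congr {P : Set G} {I : Subgroup G} (hP : ceilSet P = I) (g : G) :
    ceilSet (insert g P) = ceilSet (insert g (I : Set G)) := by
  unfold ceilSet
  congr 1
  ext M
  simp only [Set.mem_setOf_eq, and_congr_right_iff, Set.insert_subset_iff]
  intro hM hg
  constructor
  · intro hPM
    have : ceilSet P ≤ M := sInf_le ⟨hM, hPM⟩
    rw [hP] at this
    exact this
  · intro hIM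
    exact ((hP ▸ subset_ceilSet P : P ⊆ (I : Set G))).trans hIM

lemma ceilSet_insert_of_mem {P : Set G} {g : G} (hg : g ∈ ceilSet P) :
    ceilSet (insert g P) = ceilSet P := by
  unfold ceilSet
  congr 1
  ext M
  simp only [Set.mem_setOf_eq, and_congr_right_iff, Set.insert_subset_iff]
  intro hM
  constructor
  · rintro ⟨_, h⟩; exact h
  · intro h
    have : ceilSet P ≤ M := sInf_le ⟨hM, h⟩
    exact ⟨this hg, h⟩

lemma closure_eq_top_of_ceilSet_eq_top {G : Type*} [Group G] [Fintype G] {P : Set G}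
    (h : ceilSet P = ⊤) : Subgroup.closure P = ⊤ := by
  by_contra hc
  obtain ⟨M, hM, hle⟩ := (eq_top_or_exists_le_coatom (Subgroup.closure P)).resolve_left hc
  have : ceilSet P ≤ M := sInf_le ⟨hM, (Subgroup.subset_closure).trans hle⟩
  rw [h] at this
  exact hM.1 (top_le_iff.mp this)

end ceillemmas

section nimlemmas
open Classical
variable {G : Type*} [Group G] [Fintype G]

lemma gameNim_le (P : Finset G) : gameNim P ≤ Fintype.card G := by
  rw [gameNim]
  split
  · exact Nat.zero_le _
  · have : {n : ℕ | ∃ g : {g : G // g ∉ P}, gameNim (insert g.1 P) = n} =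
        Set.range (fun g : {g : G // g ∉ P} => gameNim (insert g.1 P)) := by
      ext n; simp [Set.range, eq_comm]
    rw [this]
    refine le_trans (mex_le_ncard (Set.finite_range _)) ?_
    calc (Set.range _).ncard ≤ Nat.card {g : G // g ∉ P} := by
          rw [← Set.image_univ]
          refine le_trans (Set.ncard_image_le Set.finite_univ) ?_
          simp [Set.ncard_univ]
      _ ≤ Fintype.card G := by
          rw [Nat.card_eq_fintype_card]
          exact Fintype.card_subtype_le _

lemma gameNim_of_ceil_top {P : Finset G} (h : ceilSet (P : Set G) = ⊤) : gameNim P = 0 := by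
  rw [gameNim, if_pos (closure_eq_top_of_ceilSet_eq_top h)]

end nimlemmas

section main
open Classical
variable {G : Type*} [Group G] [Fintype G]

noncomputable def OTset (I : Subgroup G) : Set ℕ :=
  {n : ℕ | ∃ Q : Finset G, Odd Q.card ∧ IsStructOption I (ceilSet (Q : Set G)) ∧ gameNim Q = n}

noncomputable def ETset (I : Subgroup G) : Set ℕ :=
  {n : ℕ | ∃ Q : Finset G, Even Q.card ∧ IsStructOption I (ceilSet (Q : Set G)) ∧ gameNim Q = n}

noncomputable def valE (I : Subgroup G) : ℕ :=
  if Even (Nat.card I) then mex (OTset I) else mex (OTset I ∪ {mex (ETset I)})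

noncomputable def valO (I : Subgroup G) : ℕ :=
  if Even (Nat.card I) then mex (ETset I ∪ {mex (OTset I)}) else mex (ETset I)

lemma OTset_bdd (I : Subgroup G) : OTset I ⊆ Set.Iic (Fintype.card G) := by
  rintro n ⟨Q, _, _, rfl⟩; exact gameNim_le Q

lemma ETset_bdd (I : Subgroup G) : ETset I ⊆ Set.Iic (Fintype.card G) := by
  rintro n ⟨Q, _, _, rfl⟩; exact gameNim_le Q

lemma mex_absorb {A B : Set ℕ} {N : ℕ} (hA : A ⊆ Set.Iic N) (hB : B ⊆ Set.Iic N) :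
    mex (insert (mex (B ∪ {mex A})) A) = mex A := by
  apply mex_insert_ne hA
  have hbdd : B ∪ {mex A} ⊆ Set.Iic (N + 1) := by
    rintro x (hx | hx)
    · exact le_trans (hB hx) (Nat.le_succ N)
    · rw [Set.mem_singleton_iff] at hx; subst hx; exact mex_le_of_subset_Iic hA
  have hnot : mex (B ∪ {mex A}) ∉ B ∪ {mex A} :=
    mex_notMem ⟨N + 2, fun h => by have := hbdd h; rw [Set.mem_Iic] at this; omega⟩
  intro h
  exact hnot (by rw [h]; exact Or.inr rfl)

theorem main_nim : ∀ (n : ℕ) (I : Subgroup G), ceilSet (I : Set G) = I → I ≠ ⊤ →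
    Fintype.card G - Nat.card I ≤ n →
    ∀ P : Finset G, ceilSet (P : Set G) = I →
    gameNim P = if Even P.card then valE I else valO I := by
  intro n
  induction n using Nat.strong_induction_on with
  | _ n ihn =>
  intro I hI htop hn
  have hcardI_lt : Nat.card I < Fintype.card G := by
    obtain ⟨x, hx⟩ : ∃ x : G, x ∉ I := by
      by_contra h
      push_neg at h
      exact htop (Subgroup.eq_top_iff' I |>.mpr h)
    have hss : (I : Set G) ⊂ Set.univ := ⟨Set.subset_univ _, fun h => hx (h (Set.mem_univ x))⟩
    have := Set.ncard_lt_ncard hss Set.finite_univ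
    rw [Set.ncard_univ, Nat.card_eq_fintype_card] at this
    rwa [← Nat.card_coe_set_eq, SetLike.coe_sort_coe] at this
  suffices h : ∀ (k : ℕ) (P : Finset G), ceilSet (P : Set G) = I → Nat.card I - P.card ≤ k →
      gameNim P = if Even P.card then valE I else valO I by
    intro P hP
    exact h _ P hP le_rfl
  intro k
  induction k using Nat.strong_induction_on with
  | _ k ihk =>
  intro P hP hk
  -- basic facts about P
  have hPsub : (P : Set G) ⊆ (I : Set G) := hP ▸ subset_ceilSet _
  have hcl : Subgroup.closure (P : Set G) ≠ ⊤ := by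
    intro h
    exact htop (top_le_iff.mp (h ▸ (closure_le_ceilSet (P : Set G)).trans (le_of_eq hP)))
  -- the set of option values outside I (with parity opposite to P)
  set T : Set ℕ := if Even P.card then OTset I else ETset I with hT
  -- every move outside I lands in T
  have hBT : ∀ g : G, g ∉ (I : Set G) → gameNim (insert g P) ∈ T := by
    intro g hg
    have hgP : g ∉ P := fun h => hg (hPsub h)
    have hcard : (insert g P).card = P.card + 1 := Finset.card_insert_of_notMem hgP
    have hceil : ceilSet ((insert g P : Finset G) : Set G) = ceilSet ((I : Set G) ∪ {g}) := by
      rw [Finset.coe_insert, ceilSet_insert_congr hP g, Set.union_comm, ← Set.insert_eq]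
    have hopt : IsStructOption I (ceilSet ((insert g P : Finset G) : Set G)) :=
      ⟨g, hg, by rw [hceil]⟩
    by_cases hpar : Even P.card
    · rw [hT, if_pos hpar]
      exact ⟨insert g P, by rw [hcard]; exact Even.add_one hpar, hopt, rfl⟩
    · rw [hT, if_neg hpar]
      exact ⟨insert g P, by rw [hcard]; exact Nat.even_add_one.mpr hpar, hopt, rfl⟩
  -- every value in T is achieved by a move outside I
  have hTB : ∀ m ∈ T, ∃ g : G, g ∉ (I : Set G) ∧ gameNim (insert g P) = m := by
    intro m hm
    have : ∃ Q : Finset G, (¬ Even Q.card ↔ Even P.card) ∧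
        IsStructOption I (ceilSet (Q : Set G)) ∧ gameNim Q = m := by
      by_cases hpar : Even P.card
      · rw [hT, if_pos hpar] at hm
        obtain ⟨Q, hQ1, hQ2, hQ3⟩ := hm
        exact ⟨Q, by simp [Nat.not_even_iff_odd.mpr hQ1, hpar], hQ2, hQ3⟩
      · rw [hT, if_neg hpar] at hm
        obtain ⟨Q, hQ1, hQ2, hQ3⟩ := hm
        exact ⟨Q, by simp [hQ1, hpar], hQ2, hQ3⟩
    obtain ⟨Q, hQpar, ⟨g, hg, hgJ⟩, hQm⟩ := this
    refine ⟨g, hg, ?_⟩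
    have hgP : g ∉ P := fun h => hg (hPsub h)
    have hceil : ceilSet ((insert g P : Finset G) : Set G) = ceilSet (Q : Set G) := by
      rw [Finset.coe_insert, ceilSet_insert_congr hP g, Set.union_comm, ← Set.insert_eq] at *
      rw [hgJ]
    have hcard : (insert g P).card = P.card + 1 := Finset.card_insert_of_notMem hgP
    have hparQ : Even Q.card ↔ Even (insert g P).card := by
      rw [hcard, Nat.even_add_one]
      tauto
    set J := ceilSet (Q : Set G) with hJ
    by_cases hJtop : J = ⊤
    · have h1 : gameNim Q = 0 := gameNim_of_ceil_top hJtop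
      have h2 : gameNim (insert g P) = 0 := gameNim_of_ceil_top (by rw [hceil]; exact hJtop)
      rw [h2, ← hQm, h1]
    · -- J is a proper structure subgroup strictly above I
      have hJceil : ceilSet (J : Set G) = J := hJ ▸ ceilSet_idem _
      have hIJ : Nat.card I < Nat.card J := by
        have hsub : (I : Set G) ⊆ (J : Set G) := by
          intro x hx
          have := subset_ceilSet ((I : Set G) ∪ {g})
          rw [hgJ] at this
          exact this (Or.inl hx)
        have hgJ' : g ∈ (J : Set G) := by
          have := subset_ceilSet ((I : Set G) ∪ {g})
          rw [hgJ] at this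
          exact this (Or.inr rfl)
        have hss : (I : Set G) ⊂ (J : Set G) := ⟨hsub, fun h => hg (h hgJ')⟩
        have := Set.ncard_lt_ncard hss (Set.toFinite _)
        rwa [← Nat.card_coe_set_eq, ← Nat.card_coe_set_eq,
          SetLike.coe_sort_coe, SetLike.coe_sort_coe] at this
      have hmeas : Fintype.card G - Nat.card J < n :=
        lt_of_lt_of_le (Nat.sub_lt_sub_left hcardI_lt hIJ) hn
      have h1 := ihn _ hmeas J hJceil hJtop le_rfl Q hJ.symm
      have h2 := ihn _ hmeas J hJceil hJtop le_rfl (insert g P) hceil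
      rw [h1] at hQm
      rw [h2, ← hQm]
      by_cases hq : Even Q.card
      · rw [if_pos hq, if_pos (hparQ.mp hq)]
      · rw [if_neg hq, if_neg (fun h => hq (hparQ.mpr h))]
  have hrw : gameNim P = mex {m : ℕ | ∃ g : {g : G // g ∉ P}, gameNim (insert g.1 P) = m} := by
    rw [gameNim, if_neg hcl]
  by_cases hfull : (I : Set G) ⊆ (P : Set G)
  · -- P fills all of I
    have hPI : (P : Set G) = (I : Set G) := Set.Subset.antisymm hPsub hfull
    have hcard : P.card = Nat.card I := by
      have : (P : Set G).ncard = (I : Set G).ncard := by rw [hPI]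
      rwa [Set.ncard_coe_finset, ← Nat.card_coe_set_eq, SetLike.coe_sort_coe] at this
    have hS : {m : ℕ | ∃ g : {g : G // g ∉ P}, gameNim (insert g.1 P) = m} = T := by
      ext m
      constructor
      · rintro ⟨⟨g, hg⟩, rfl⟩
        exact hBT g (fun h => hg (by rw [← hPI] at h; exact h))
      · intro hm
        obtain ⟨g, hgI, hval⟩ := hTB m hm
        exact ⟨⟨g, fun h => hgI (hPsub h)⟩, hval⟩
    rw [hrw, hS]
    by_cases hpar : Even P.card
    · rw [hT, if_pos hpar, if_pos hpar, valE, if_pos (hcard ▸ hpar)]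
    · rw [hT, if_neg hpar, if_neg hpar, valO, if_neg (hcard ▸ hpar)]
  · -- there is a move inside I
    obtain ⟨g0, hg0I, hg0P⟩ : ∃ g0, g0 ∈ (I : Set G) ∧ g0 ∉ (P : Set G) := by
      rw [Set.not_subset] at hfull
      obtain ⟨g0, h1, h2⟩ := hfull
      exact ⟨g0, h1, h2⟩
    have hPlt : P.card < Nat.card I := by
      have hss : (P : Set G) ⊂ (I : Set G) := ⟨hPsub, fun h => hg0P (h hg0I)⟩
      have := Set.ncard_lt_ncard hss (Set.toFinite _)
      rwa [Set.ncard_coe_finset, ← Nat.card_coe_set_eq, SetLike.coe_sort_coe] at this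
    set c : ℕ := if Even P.card then valO I else valE I with hc
    have hA : ∀ g, g ∈ (I : Set G) → g ∉ P → gameNim (insert g P) = c := by
      intro g hgI hgP
      have hceil' : ceilSet ((insert g P : Finset G) : Set G) = I := by
        rw [Finset.coe_insert, ceilSet_insert_of_mem (by rw [hP]; exact hgI), hP]
      have hcard1 : (insert g P).card = P.card + 1 := Finset.card_insert_of_notMem hgP
      have := ihk (Nat.card I - P.card - 1) (by omega) (insert g P) hceil' (by omega)
      rw [this, hcard1]
      by_cases hpar : Even P.card
      · rw [if_neg (by rw [Nat.even_add_one]; exact fun h => h hpar), hc, if_pos hpar]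
      · rw [if_pos (Nat.even_add_one.mpr hpar), hc, if_neg hpar]
    have hS : {m : ℕ | ∃ g : {g : G // g ∉ P}, gameNim (insert g.1 P) = m} = insert c T := by
      ext m
      constructor
      · rintro ⟨⟨g, hg⟩, rfl⟩
        by_cases hgI : g ∈ (I : Set G)
        · exact Or.inl (hA g hgI hg)
        · exact Or.inr (hBT g hgI)
      · rintro (rfl | hm)
        · exact ⟨⟨g0, hg0P⟩, hA g0 hg0I hg0P⟩
        · obtain ⟨g, hgI, hval⟩ := hTB m hm
          exact ⟨⟨g, fun h => hgI (hPsub h)⟩, hval⟩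
    rw [hrw, hS]
    by_cases hpar : Even P.card <;> by_cases hparI : Even (Nat.card I)
    · -- P even, |I| even : absorb
      rw [hT, if_pos hpar, hc, if_pos hpar, if_pos hpar, valE, if_pos hparI, valO, if_pos hparI]
      exact mex_absorb (OTset_bdd I) (ETset_bdd I)
    · -- P even, |I| odd : union
      rw [hT, if_pos hpar, hc, if_pos hpar, if_pos hpar, valE, if_neg hparI, valO, if_neg hparI]
      rw [Set.insert_eq, Set.union_comm]
    · -- P odd, |I| even : union
      rw [hT, if_neg hpar, hc, if_neg hpar, if_neg hpar, valO, if_pos hparI, valE, if_pos hparI]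
      rw [Set.insert_eq, Set.union_comm]
    · -- P odd, |I| odd : absorb
      rw [hT, if_neg hpar, hc, if_neg hpar, if_neg hpar, valO, if_neg hparI, valE, if_neg hparI]
      exact mex_absorb (ETset_bdd I) (OTset_bdd I)

end main

/-- Type calculus for GEN(G): the nim-values of positions in a structure class
`X_I` (with `I ≠ G`) are computed by the mex rule from the nim-values of the
positions in the option structure classes, according to parities. -/
theorem type_calculus {G : Type*} [Group G] [Fintype G]
    (I : Subgroup G) (hI : ceilSet (I : Set G) = I) (hItop : I ≠ ⊤)
    (O_T E_T : Set ℕ)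
    (hOT : O_T = {n : ℕ | ∃ Q : Finset G,
      Odd Q.card ∧ IsStructOption I (ceilSet (Q : Set G)) ∧ gameNim Q = n})
    (hET : E_T = {n : ℕ | ∃ Q : Finset G,
      Even Q.card ∧ IsStructOption I (ceilSet (Q : Set G)) ∧ gameNim Q = n}) :
    (Even (Nat.card I) →
      (∀ P : Finset G, ceilSet (P : Set G) = I → Even P.card →
        gameNim P = mex O_T) ∧
      (∀ P : Finset G, ceilSet (P : Set G) = I → Odd P.card →
        gameNim P = mex (E_T ∪ {mex O_T}))) ∧
    (Odd (Nat.card I) →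
      (∀ P : Finset G, ceilSet (P : Set G) = I → Odd P.card →
        gameNim P = mex E_T) ∧
      (∀ P : Finset G, ceilSet (P : Set G) = I → Even P.card →
        gameNim P = mex (O_T ∪ {mex E_T}))) := by
  have hO : O_T = OTset I := hOT
  have hE : E_T = ETset I := hET
  have key : ∀ P : Finset G, ceilSet (P : Set G) = I →
      gameNim P = if Even P.card then valE I else valO I :=
    fun P hP => main_nim (Fintype.card G) I hI hItop (Nat.sub_le _ _) P hP
  constructor
  · intro hEv
    constructor
    · intro P hP hpar
      rw [key P hP, if_pos hpar, valE, if_pos hEv, hO]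
    · intro P hP hpar
      rw [key P hP, if_neg (Nat.not_even_iff_odd.mpr hpar), valO, if_pos hEv, hO, hE]
  · intro hOdd
    have hEv' : ¬ Even (Nat.card I) := Nat.not_even_iff_odd.mpr hOdd
    constructor
    · intro P hP hpar
      rw [key P hP, if_neg (Nat.not_even_iff_odd.mpr hpar), valO, if_neg hEv', hE]
    · intro P hP hpar
      rw [key P hP, if_pos hpar, valE, if_neg hEv', hO, hE]
end

section
/- Let G be a finite group of even order and let I be a structure subgroup with I ≠ G. Then there exists a structure subgroup J of even order such that X_J is an option of X_I. -/
/-- In a group of even order, every structure class `X_I` with `I ≠ G` has an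
option `X_J` with `J` of even order. -/
theorem exists_even_option {G : Type*} [Group G] [Fintype G]
    (heven : Even (Fintype.card G))
    (I : Subgroup G) (hI : ceilSet (I : Set G) = I) (hItop : I ≠ ⊤) :
    ∃ J : Subgroup G, ceilSet (J : Set G) = J ∧ IsStructOption I J ∧
      Even (Nat.card J) := by
  classical
  -- an element of order 2
  haveI : Fact (Nat.Prime 2) := ⟨Nat.prime_two⟩
  obtain ⟨t, ht⟩ := exists_prime_orderOf_dvd_card (G := G) 2 heven.two_dvd
  -- choose g ∉ I
  have hg : ∃ g, g ∉ I := by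
    by_contra h
    push_neg at h
    exact hItop ((Subgroup.eq_top_iff' I).mpr h)
  obtain ⟨g₀, hg₀⟩ := hg
  set g : G := if t ∈ I then g₀ else t with hgdef
  have hgI : g ∉ I := by
    by_cases h : t ∈ I <;> simp [hgdef, h, hg₀]
  set S : Set G := (I : Set G) ∪ {g} with hS
  have hsub : S ⊆ (ceilSet S : Set G) := by
    intro x hx
    rw [SetLike.mem_coe, ceilSet, Subgroup.mem_sInf]
    exact fun M hM => hM.2 hx
  have htJ : t ∈ ceilSet S := by
    by_cases h : t ∈ I
    · exact hsub (Or.inl h)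
    · apply hsub
      have : g = t := by simp [hgdef, h]
      exact Or.inr (by simp [this])
  refine ⟨ceilSet S, ?_, ⟨g, hgI, rfl⟩, ?_⟩
  · -- idempotence
    have hsets : {M : Subgroup G | IsCoatom M ∧ (ceilSet S : Set G) ⊆ (M : Set G)}
        = {M : Subgroup G | IsCoatom M ∧ S ⊆ (M : Set G)} := by
      ext M
      constructor
      · rintro ⟨hM, hle⟩
        exact ⟨hM, hsub.trans hle⟩
      · rintro ⟨hM, hle⟩
        exact ⟨hM, SetLike.coe_subset_coe.mpr (sInf_le ⟨hM, hle⟩)⟩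
    show sInf _ = _
    rw [hsets]; rfl
  · -- even order
    have hdvd : (2 : ℕ) ∣ Nat.card (ceilSet S) :=
      ht ▸ Subgroup.orderOf_dvd_natCard _ htJ
    exact even_iff_two_dvd.mpr hdvd
end

section
/- Let G be a finite group of even order, let n ≥ 1, and let I and J be structure subgroups of odd order with δ_G(I) = n and δ_G(J) = n−1, such that X_J is an option of X_I. If X_J has no option X_L with |L| even and δ_G(L) = n−1, then X_I has no option X_K with |K| even and δ_G(K) = n. (In the paper's terminology: if X_J is rough, then so is X_I.) -/
section aux
variable {G : Type*} [Group G]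

lemma ceilSet_mono {P Q : Set G} (h : P ⊆ Q) : ceilSet P ≤ ceilSet Q :=
  sInf_le_sInf fun M hM => ⟨hM.1, h.trans hM.2⟩

variable [Fintype G]

lemma defSet_nonempty (S : Set G) :
    {n : ℕ | ∃ Q : Finset G, Q.card = n ∧ Subgroup.closure (S ∪ (Q : Set G)) = ⊤}.Nonempty := by
  refine ⟨(Finset.univ : Finset G).card, Finset.univ, rfl, ?_⟩
  simp [Set.union_univ]

lemma deficiency_mem (S : Set G) :
    ∃ Q : Finset G, Q.card = deficiency S ∧ Subgroup.closure (S ∪ (Q : Set G)) = ⊤ :=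
  Nat.sInf_mem (defSet_nonempty S)

lemma deficiency_le_of_subset {S T : Set G} (h : S ⊆ T) : deficiency T ≤ deficiency S := by
  obtain ⟨Q, hQ, hgen⟩ := deficiency_mem S
  refine Nat.sInf_le ⟨Q, hQ, ?_⟩
  rw [eq_top_iff, ← hgen]
  exact Subgroup.closure_mono (Set.union_subset_union_left _ h)

lemma deficiency_le_union_singleton (S : Set G) (g : G) :
    deficiency S ≤ deficiency (S ∪ {g}) + 1 := by
  classical
  obtain ⟨Q, hQ, hgen⟩ := deficiency_mem (S ∪ {g})
  calc deficiency S ≤ (insert g Q).card := by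
        refine Nat.sInf_le ⟨insert g Q, rfl, ?_⟩
        rw [← hgen]
        congr 1
        rw [Finset.coe_insert, Set.insert_eq, ← Set.union_assoc]
    _ ≤ Q.card + 1 := Finset.card_insert_le _ _
    _ = deficiency (S ∪ {g}) + 1 := by rw [hQ]

lemma closure_ceil_union_eq_top_iff (P Q : Set G) :
    Subgroup.closure ((ceilSet P : Set G) ∪ Q) = ⊤ ↔ Subgroup.closure (P ∪ Q) = ⊤ := by
  constructor
  · intro h
    by_contra hne
    have : IsCoatomic (Subgroup G) :=
      isCoatomic_of_orderTop_gt_wellFounded (Finite.to_wellFoundedGT).wf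
    rcases (eq_top_or_exists_le_coatom (Subgroup.closure (P ∪ Q))).resolve_left hne with
      ⟨M, hM, hle⟩
    have hPQ : P ∪ Q ⊆ (M : Set G) := Subgroup.subset_closure.trans hle
    have hceil : ceilSet P ≤ M := sInf_le ⟨hM, (Set.subset_union_left).trans hPQ⟩
    have : Subgroup.closure ((ceilSet P : Set G) ∪ Q) ≤ M := by
      apply Subgroup.closure_le _ |>.2
      exact Set.union_subset hceil ((Set.subset_union_right).trans hPQ)
    rw [h] at this
    exact hM.1 (top_le_iff.1 this)
  · intro h
    rw [eq_top_iff, ← h]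
    exact Subgroup.closure_mono (Set.union_subset_union_left _ (subset_ceilSet P))

lemma deficiency_ceil_union (P Q : Set G) :
    deficiency ((ceilSet P : Set G) ∪ Q) = deficiency (P ∪ Q) := by
  unfold deficiency
  congr 1
  ext n
  constructor <;> rintro ⟨F, hF, hgen⟩ <;> refine ⟨F, hF, ?_⟩ <;>
    rw [Set.union_assoc] at hgen ⊢
  · exact (closure_ceil_union_eq_top_iff P (Q ∪ F)).1 hgen
  · exact (closure_ceil_union_eq_top_iff P (Q ∪ F)).2 hgen

lemma deficiency_ceil (P : Set G) : deficiency (ceilSet P : Set G) = deficiency P := by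
  have := deficiency_ceil_union P (∅ : Set G)
  simpa using this

end aux

/-- Let `G` have even order, `n ≥ 1`, and let `X_I, X_J` be odd structure
classes with deficiencies `n` and `n-1` respectively such that `X_J` is an
option of `X_I`.  If `X_J` is rough (has no even option of deficiency `n-1`),
then `X_I` is rough (has no even option of deficiency `n`). -/
theorem rough_of_rough_option {G : Type*} [Group G] [Fintype G]
    (heven : Even (Fintype.card G)) (n : ℕ) (hn : 1 ≤ n)
    (I J : Subgroup G) (hI : ceilSet (I : Set G) = I) (hJ : ceilSet (J : Set G) = J)
    (hIodd : Odd (Nat.card I)) (hJodd : Odd (Nat.card J))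
    (hIdef : deficiency (I : Set G) = n) (hJdef : deficiency (J : Set G) = n - 1)
    (hopt : IsStructOption I J)
    (hrough : ¬ ∃ L : Subgroup G, IsStructOption J L ∧ Even (Nat.card L) ∧
      deficiency (L : Set G) = n - 1) :
    ¬ ∃ K : Subgroup G, IsStructOption I K ∧ Even (Nat.card K) ∧
      deficiency (K : Set G) = n := by
  rintro ⟨K, ⟨g, hgI, hK⟩, hKeven, hKdef⟩
  obtain ⟨h, hhI, hJ'⟩ := hopt
  apply hrough
  -- g ∉ J
  have hIJ : I ≤ J := by
    rw [← hJ']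
    exact fun x hx => subset_ceilSet _ (Or.inl hx)
  have hgJ : g ∉ J := by
    intro hgJ
    have hKJ : K ≤ J := by
      rw [← hK, ← hJ]
      exact ceilSet_mono (Set.union_subset hIJ (by simpa using hgJ))
    have hdvd : Nat.card K ∣ Nat.card J := Subgroup.card_dvd_of_le hKJ
    exact (Nat.not_even_iff_odd.mpr hJodd)
      ((even_iff_two_dvd).mpr ((hKeven.two_dvd).trans hdvd))
  refine ⟨ceilSet ((J : Set G) ∪ {g}), ⟨g, hgJ, rfl⟩, ?_, ?_⟩
  · have hKL : K ≤ ceilSet ((J : Set G) ∪ {g}) := by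
      rw [← hK]
      exact ceilSet_mono (Set.union_subset_union_left _ (fun x hx => hIJ hx))
    exact (even_iff_two_dvd).mpr
      ((hKeven.two_dvd).trans (Subgroup.card_dvd_of_le hKL))
  · have h1 : deficiency ((ceilSet ((J : Set G) ∪ {g}) : Set G)) =
        deficiency ((J : Set G) ∪ {g}) := deficiency_ceil _
    have h2 : deficiency ((J : Set G) ∪ {g}) =
        deficiency (((I : Set G) ∪ {h}) ∪ {g}) := by
      conv_lhs => rw [← hJ']
      exact deficiency_ceil_union _ _
    have h3 : ((I : Set G) ∪ {h}) ∪ {g} = ((I : Set G) ∪ {g}) ∪ {h} :=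
      Set.union_right_comm _ _ _
    have h4 : deficiency (((I : Set G) ∪ {g}) ∪ {h}) =
        deficiency ((K : Set G) ∪ {h}) := by
      conv_rhs => rw [← hK]
      exact (deficiency_ceil_union _ _).symm
    have hupper : deficiency ((ceilSet ((J : Set G) ∪ {g}) : Set G)) ≤ n - 1 := by
      rw [← hJdef]
      exact deficiency_le_of_subset
        ((Set.subset_union_left).trans (subset_ceilSet _))
    have hlower : n ≤ deficiency ((K : Set G) ∪ {h}) + 1 := by
      rw [← hKdef]
      exact deficiency_le_union_singleton _ _
    rw [h1, h2, h3, h4] at *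
    omega
end
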